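/- For r, s, k ∈ ℕ with k > 0, the number a(r,s,k) of assignments of s+k drivers to r+s spaces (under the linear parking rule) such that r spaces remain empty, s spaces are occupied, and k drivers leave, satisfies a(r,s,k) = Σ_{i=0}^{k+1} C(s+k, k+1-i) · a(r, s-1, i). -/

import Mathlib

open Finset

/-- One step of the linear parking process: the driver with choice `c` takes the
first free space with index at least `c`, if any; otherwise the failure count increases. -/
def parkStep {n : ℕ} (p : Finset (Fin n) × ℕ) (c : Fin n) : Finset (Fin n) × ℕ :=
  if h : ((Finset.univ \ p.1).filter (fun x => c ≤ x)).Nonempty then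
    (insert (((Finset.univ \ p.1).filter (fun x => c ≤ x)).min' h) p.1, p.2)
  else
    (p.1, p.2 + 1)

/-- The set of occupied spaces and the number of drivers who fail to park,
when drivers `0, 1, ..., m-1` with choices `f 0, f 1, ..., f (m-1)` arrive in order. -/
def parkRun {n m : ℕ} (f : Fin m → Fin n) : Finset (Fin n) × ℕ :=
  (List.ofFn f).foldl parkStep (∅, 0)

/-- The defect of an assignment: the number of drivers who fail to park. -/
def defect {n m : ℕ} (f : Fin m → Fin n) : ℕ := (parkRun f).2

/-- `cp n m k` is the number of assignments of `m` drivers to `n` spaces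
under which exactly `k` drivers fail to park. -/
def cp (n m k : ℕ) : ℕ :=
  (Finset.univ.filter (fun f : Fin m → Fin n => defect f = k)).card

/-- `a r s k` is the number of assignments of `s + k` drivers to `r + s` spaces such that
exactly `k` drivers leave (and hence `s` spaces end up occupied and `r` remain empty);
it is `0` whenever one of the arguments is negative. -/
def a (r s k : ℤ) : ℕ :=
  if 0 ≤ r ∧ 0 ≤ s ∧ 0 ≤ k then cp (r + s).toNat (s + k).toNat k.toNat else 0

def drop {n : ℕ} (c : Fin (n+1)) : Option (Fin n) :=
  if h : c = Fin.last n then none else some (c.castPred h)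

def PInv {n : ℕ} (p : Finset (Fin (n+1)) × ℕ) (q : Finset (Fin n) × ℕ) (j : ℕ) : Prop :=
  (∀ y : Fin n, y.castSucc ∈ p.1 ↔ y ∈ q.1) ∧
  p.2 + (if Fin.last n ∈ p.1 then 1 else 0) = j + q.2 ∧
  (Fin.last n ∈ p.1 ↔ 1 ≤ j + q.2)

lemma step_last {n : ℕ} (p : Finset (Fin (n+1)) × ℕ) (q : Finset (Fin n) × ℕ) (j : ℕ)
    (h : PInv p q j) : PInv (parkStep p (Fin.last n)) q (j+1) := by
  obtain ⟨h1, h2, h3⟩ := h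
  by_cases hl : Fin.last n ∈ p.1
  · have he : ((Finset.univ \ p.1).filter (fun x => Fin.last n ≤ x)) = ∅ := by
      ext x
      simp only [mem_filter, mem_sdiff, mem_univ, true_and, notMem_empty, iff_false, not_and]
      intro hx hx2
      exact hx (Fin.last_le_iff.mp hx2 ▸ hl)
    rw [parkStep, dif_neg (by rw [he]; exact not_nonempty_empty)]
    refine ⟨h1, ?_, ?_⟩
    · simp only [hl, if_pos] at h2 ⊢; omega
    · simpa [hl] using by omega
  · have hne : ((Finset.univ \ p.1).filter (fun x => Fin.last n ≤ x)).Nonempty :=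
      ⟨Fin.last n, by simp [hl]⟩
    have hmin : ((Finset.univ \ p.1).filter (fun x => Fin.last n ≤ x)).min' hne = Fin.last n := by
      have := min'_mem _ hne
      simp only [mem_filter] at this
      exact Fin.last_le_iff.mp this.2
    rw [parkStep, dif_pos hne, hmin]
    refine ⟨fun y => ?_, ?_, ?_⟩
    · simp only [mem_insert]
      constructor
      · rintro (hy | hy)
        · exact absurd hy (Fin.castSucc_lt_last y).ne
        · exact (h1 y).mp hy
      · intro hy; exact Or.inr ((h1 y).mpr hy)
    · simp only [hl, ite_false] at h2
      simp only [mem_insert, true_or, ite_true]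
      omega
    · simp only [mem_insert, true_or, true_iff]
      omega

lemma step_cast {n : ℕ} (p : Finset (Fin (n+1)) × ℕ) (q : Finset (Fin n) × ℕ) (j : ℕ)
    (c' : Fin n) (h : PInv p q j) : PInv (parkStep p (Fin.castSucc c')) (parkStep q c') j := by
  obtain ⟨h1, h2, h3⟩ := h
  set A := filter (fun x => Fin.castSucc c' ≤ x) (univ \ p.1) with hAdef
  set A' := filter (fun x => c' ≤ x) (univ \ q.1) with hA'def
  have hA : ∀ y : Fin n, y.castSucc ∈ A ↔ y ∈ A' := by
    intro y
    simp [hAdef, hA'def, mem_filter, mem_sdiff, h1 y, Fin.castSucc_le_castSucc_iff]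
  have hAlast : Fin.last n ∈ A ↔ Fin.last n ∉ p.1 := by
    simp [hAdef, mem_filter, mem_sdiff, Fin.le_last]
  by_cases h' : A'.Nonempty
  · set m' := A'.min' h' with hm'
    have hmem : (Fin.castSucc m') ∈ A := (hA m').mpr (min'_mem _ h')
    have hAne : A.Nonempty := ⟨_, hmem⟩
    have hmin : A.min' hAne = Fin.castSucc m' := by
      refine le_antisymm (min'_le _ _ hmem) (le_min' _ _ _ (fun x hx => ?_))
      induction x using Fin.lastCases with
      | last => exact (Fin.castSucc_lt_last m').le
      | cast y => exact Fin.castSucc_le_castSucc_iff.mpr (min'_le _ _ ((hA y).mp hx))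
    rw [parkStep, parkStep, dif_pos h', dif_pos hAne]
    simp only [← hAdef, ← hA'def, hmin]
    have hlins : (Fin.last n ∈ insert (Fin.castSucc m') p.1) ↔ Fin.last n ∈ p.1 := by
      simp only [mem_insert]
      constructor
      · rintro (hy | hy)
        · exact absurd hy.symm (Fin.castSucc_lt_last m').ne
        · exact hy
      · exact Or.inr
    refine ⟨fun y => ?_, ?_, ?_⟩
    · simp only [mem_insert, Fin.castSucc_inj, h1 y]; exact Iff.rfl
    · simp only [hlins]; exact h2
    · simp only [hlins]; exact h3
  · rw [parkStep, parkStep, dif_neg h']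
    by_cases hl : Fin.last n ∈ p.1
    · have hAe : ¬ A.Nonempty := by
        rintro ⟨x, hx⟩
        induction x using Fin.lastCases with
        | last => exact (hAlast.mp hx) hl
        | cast y => exact h' ⟨y, (hA y).mp hx⟩
      rw [dif_neg hAe]
      refine ⟨h1, ?_, ?_⟩
      · simp only [hl, ite_true] at h2 ⊢; omega
      · simp only [hl, true_iff]; omega
    · have hAne : A.Nonempty := ⟨Fin.last n, hAlast.mpr hl⟩
      have hmin : A.min' hAne = Fin.last n := by
        have hmem := min'_mem _ hAne
        generalize hz : A.min' hAne = z at *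
        induction z using Fin.lastCases with
        | last => rfl
        | cast y => exact absurd ((hA y).mp hmem) (fun hy => h' ⟨y, hy⟩)
      rw [dif_pos hAne]
      simp only [← hAdef, hmin]
      refine ⟨fun y => ?_, ?_, ?_⟩
      · simp only [mem_insert, h1 y]
        constructor
        · rintro (hy | hy)
          · exact absurd hy (Fin.castSucc_lt_last y).ne
          · exact hy
        · exact Or.inr
      · simp only [mem_insert, true_or, ite_true]
        simp only [hl, ite_false] at h2
        omega
      · simp only [mem_insert, true_or, true_iff]
        omega

lemma pinv_foldl {n : ℕ} : ∀ (L : List (Fin (n+1))) (p : Finset (Fin (n+1)) × ℕ)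
    (q : Finset (Fin n) × ℕ) (j : ℕ), PInv p q j →
    PInv (L.foldl parkStep p) ((L.filterMap drop).foldl parkStep q)
      (j + L.count (Fin.last n)) := by
  intro L
  induction L with
  | nil => intro p q j h; simpa using h
  | cons c L ih =>
    intro p q j h
    induction c using Fin.lastCases with
    | last =>
      have hd : drop (Fin.last n) = none := by simp [drop]
      simp only [List.foldl_cons, List.filterMap_cons, hd, List.count_cons, beq_self_eq_true,
        if_true]
      have := ih (parkStep p (Fin.last n)) q (j+1) (step_last p q j h)
      have hj : (j + 1) + L.count (Fin.last n) = j + (L.count (Fin.last n) + 1) := by omega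
      rw [hj] at this
      exact this
    | cast y =>
      have hd : drop (Fin.castSucc y) = some y := by
        rw [drop, dif_neg (Fin.castSucc_lt_last y).ne]
        simp [Fin.castPred_castSucc]
      have hcnt : (Fin.castSucc y == Fin.last n) = false := by
        simp [Fin.castSucc_lt_last y |>.ne]
      simp only [List.foldl_cons, List.filterMap_cons, hd, List.count_cons, hcnt, if_false]
      have := ih (parkStep p (Fin.castSucc y)) (parkStep q y) j (step_cast p q j y h)
      simpa using this

lemma defect_split {n : ℕ} (L : List (Fin (n+1))) (k : ℕ) (hk : 0 < k) :
    (L.foldl parkStep ((∅ : Finset (Fin (n+1))), 0)).2 = k ↔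
    L.count (Fin.last n) + ((L.filterMap drop).foldl parkStep ((∅ : Finset (Fin n)), 0)).2
      = k + 1 := by
  have h0 : PInv ((∅ : Finset (Fin (n+1))), 0) ((∅ : Finset (Fin n)), 0) 0 := by
    refine ⟨by simp, by simp, by simp⟩
  obtain ⟨h1, h2, h3⟩ := pinv_foldl L _ _ _ h0
  simp only [Nat.zero_add] at h2 h3
  constructor
  · intro ht
    rw [ht] at h2
    have : Fin.last n ∈ (L.foldl parkStep ((∅ : Finset (Fin (n+1))), 0)).1 := by
      rw [h3]; omega
    simp only [this, ite_true] at h2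
    omega
  · intro hs
    rw [hs] at h3
    have : Fin.last n ∈ (L.foldl parkStep ((∅ : Finset (Fin (n+1))), 0)).1 := by
      rw [h3]; omega
    simp only [this, ite_true] at h2
    omega

lemma filterMap_eq_of_map_eq {α β : Type*} {F : α → Option β} :
    ∀ {L : List α} {L' : List β}, L.map F = L'.map some → L.filterMap F = L' := by
  intro L
  induction L with
  | nil => intro L' h; cases L' <;> simp_all
  | cons x L ih =>
    intro L' h
    cases L' with
    | nil => simp at h
    | cons y L'' =>
      simp only [List.map_cons, List.cons.injEq] at h
      simp [List.filterMap_cons, h.1, ih h.2]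

lemma filterMap_filter_eq {α β : Type*} (F : α → Option β) (p : α → Bool) :
    ∀ (L : List α), (∀ x ∈ L, p x = false → F x = none) →
      L.filterMap F = (L.filter p).filterMap F := by
  intro L
  induction L with
  | nil => simp
  | cons x L ih =>
    intro h
    by_cases hx : p x
    · simp only [List.filterMap_cons, List.filter_cons, hx, if_true]
      rw [ih (fun y hy => h y (List.mem_cons_of_mem x hy))]
    · have hFx : F x = none := h x List.mem_cons_self (by simpa using hx)
      simp only [List.filterMap_cons, List.filter_cons, hFx]
      rw [ih (fun y hy => h y (List.mem_cons_of_mem x hy))]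
      simp [hx]

lemma sort_eq_filter_finRange {m : ℕ} (S : Finset (Fin m)) :
    S.sort (· ≤ ·) = (List.finRange m).filter (fun x => decide (x ∈ S)) := by
  refine (fun h1 h2 => List.Perm.eq_of_pairwise' (r := (· < ·)) (Finset.sortedLT_sort S).pairwise h2 h1) ?_ ?_
  · rw [List.perm_ext_iff_of_nodup (Finset.sort_nodup _ _)
      (List.Nodup.filter _ (List.nodup_finRange m))]
    intro x
    simp [Finset.mem_sort, List.mem_filter]
  · exact List.Pairwise.sublist List.filter_sublist (List.pairwise_lt_finRange m)
lemma card_filter_univ (m : ℕ) (p : Fin m → Prop) [DecidablePred p] :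
    (univ.filter p).card = (List.finRange m).countP (fun x => decide (p x)) := by
  rw [Fin.univ_def]
  change Multiset.card (Multiset.filter p (↑(List.finRange m))) = _
  rw [Multiset.filter_coe, Multiset.coe_card, ← List.countP_eq_length_filter]
lemma count_ofFn {n m : ℕ} (f : Fin m → Fin (n+1)) :
    (List.ofFn f).count (Fin.last n) = (univ.filter (fun x => f x = Fin.last n)).card := by
  rw [List.ofFn_eq_map, List.count_eq_countP, List.countP_map, card_filter_univ]
  congr 1

lemma drop_last {n : ℕ} : drop (Fin.last n) = none := by simp [drop]

lemma drop_castSucc {n : ℕ} (y : Fin n) : drop (Fin.castSucc y) = some y := by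
  rw [drop, dif_neg (Fin.castSucc_lt_last y).ne]
  simp [Fin.castPred_castSucc]

lemma ofFn_restrict {n m q : ℕ} (f : Fin m → Fin (n+1)) (S : Finset (Fin m))
    (hS : ∀ x, f x = Fin.last n ↔ x ∈ S) (hc : Sᶜ.card = q) (g : Fin q → Fin n)
    (hg : ∀ i, (g i).castSucc = f (Sᶜ.orderEmbOfFin hc i)) :
    (List.ofFn f).filterMap drop = List.ofFn g := by
  rw [List.ofFn_eq_map, List.filterMap_map]
  rw [filterMap_filter_eq (drop ∘ f) (fun x => decide (x ∈ Sᶜ)) _ ?side]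
  case side =>
    intro x _ hx
    have hxS : x ∈ S := by simpa using hx
    simp only [Function.comp_apply, (hS x).mpr hxS, drop_last]
  rw [← sort_eq_filter_finRange]
  have hsort : (Sᶜ.sort (· ≤ ·)) = List.ofFn (fun i : Fin q => Sᶜ.orderEmbOfFin hc i) := by
    refine List.ext_getElem (by simp [hc]) (fun i h1 h2 => ?_)
    simp only [List.getElem_ofFn]
    rw [Finset.orderEmbOfFin_apply]
    rfl
  rw [hsort]
  refine filterMap_eq_of_map_eq ?_
  rw [List.map_ofFn, List.map_ofFn]
  congr 1
  funext i
  simp only [Function.comp_apply, ← hg i, drop_castSucc]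

lemma defect_iff {n m k : ℕ} (hk : 0 < k) (f : Fin m → Fin (n+1)) {q : ℕ} (g : Fin q → Fin n)
    (hlist : (List.ofFn f).filterMap drop = List.ofFn g) :
    (defect f = k ↔ (List.ofFn f).count (Fin.last n) + defect g = k + 1) := by
  unfold defect parkRun
  rw [← hlist]
  exact defect_split _ k hk

lemma card_fiber {n m k : ℕ} (hk : 0 < k) (S : Finset (Fin m)) :
    (univ.filter (fun f : Fin m → Fin (n+1) => defect f = k ∧
        univ.filter (fun x => f x = Fin.last n) = S)).card
      = if S.card ≤ k + 1 then cp n (m - S.card) (k + 1 - S.card) else 0 := by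
  have hc : Sᶜ.card = m - S.card := by
    rw [Finset.card_compl, Fintype.card_fin]
  have hfib : ∀ (f : Fin m → Fin (n+1)), univ.filter (fun x => f x = Fin.last n) = S →
      ∀ x, (f x = Fin.last n ↔ x ∈ S) := by
    intro f hf x
    rw [← hf]; simp
  have hcount : ∀ (f : Fin m → Fin (n+1)), univ.filter (fun x => f x = Fin.last n) = S →
      (List.ofFn f).count (Fin.last n) = S.card := by
    intro f hf
    rw [count_ofFn, hf]
  have hne : ∀ (f : Fin m → Fin (n+1)), univ.filter (fun x => f x = Fin.last n) = S →
      ∀ i : Fin (m - S.card), f (Sᶜ.orderEmbOfFin hc i) ≠ Fin.last n :=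
    fun f hf i hEq => (Finset.mem_compl.mp (Sᶜ.orderEmbOfFin_mem hc i)) ((hfib f hf _).mp hEq)
  by_cases hj : S.card ≤ k + 1
  · rw [if_pos hj]
    rw [cp]
    refine Finset.card_bij'
      (fun f hf => fun i0 => (f (Sᶜ.orderEmbOfFin hc i0)).castPred
        (hne f (Finset.mem_filter.mp hf).2.2 i0))
      (fun g _ => fun x => if hx : x ∈ S then Fin.last n
        else (g ((Sᶜ.orderIsoOfFin hc).symm ⟨x, Finset.mem_compl.mpr hx⟩)).castSucc)
      ?_ ?_ ?_ ?_
    · -- forward maps into target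
      intro f hf
      obtain ⟨-, hdef, hfibf⟩ := Finset.mem_filter.mp hf
      simp only [Finset.mem_filter, Finset.mem_univ, true_and]
      have hlist := ofFn_restrict f S (hfib f hfibf) hc
        (fun i0 => (f (Sᶜ.orderEmbOfFin hc i0)).castPred (hne f hfibf i0))
        (fun i => Fin.castSucc_castPred _ _)
      have := (defect_iff hk f _ hlist).mp hdef
      rw [hcount f hfibf] at this
      omega
    · -- backward maps into source
      intro g hg
      simp only [Finset.mem_filter, Finset.mem_univ, true_and] at hg ⊢
      have hfibG : univ.filter (fun x =>
          (if hx : x ∈ S then Fin.last n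
            else (g ((Sᶜ.orderIsoOfFin hc).symm ⟨x, Finset.mem_compl.mpr hx⟩)).castSucc)
          = Fin.last n) = S := by
        ext x
        simp only [Finset.mem_filter, Finset.mem_univ, true_and]
        by_cases hx : x ∈ S
        · simp [hx]
        · simp only [hx, dite_false, iff_false]
          exact (Fin.castSucc_lt_last _).ne
      refine ⟨?_, hfibG⟩
      have hGemb : ∀ i : Fin (m - S.card),
          (g i).castSucc = (fun x => if hx : x ∈ S then Fin.last n
            else (g ((Sᶜ.orderIsoOfFin hc).symm ⟨x, Finset.mem_compl.mpr hx⟩)).castSucc)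
            (Sᶜ.orderEmbOfFin hc i) := by
        intro i
        have hmem : Sᶜ.orderEmbOfFin hc i ∈ Sᶜ := Sᶜ.orderEmbOfFin_mem hc i
        simp only [dif_neg (Finset.mem_compl.mp hmem)]
        congr 1
        have : (⟨Sᶜ.orderEmbOfFin hc i, hmem⟩ : {x // x ∈ Sᶜ}) = Sᶜ.orderIsoOfFin hc i := by
          ext
          rw [Finset.coe_orderIsoOfFin_apply]
        rw [this, OrderIso.symm_apply_apply]
      have hlist := ofFn_restrict _ S (hfib _ hfibG) hc g hGemb
      rw [defect_iff hk _ g hlist, hcount _ hfibG, hg]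
      omega
    · -- left inverse
      intro f hf
      obtain ⟨-, -, hfibf⟩ := Finset.mem_filter.mp hf
      funext x
      by_cases hx : x ∈ S
      · simp only [hx, dite_true]
        exact ((hfib f hfibf x).mpr hx).symm
      · simp only [hx, dite_false]
        have hemb : Sᶜ.orderEmbOfFin hc ((Sᶜ.orderIsoOfFin hc).symm ⟨x, Finset.mem_compl.mpr hx⟩)
            = x := by
          rw [← Finset.coe_orderIsoOfFin_apply, OrderIso.apply_symm_apply]
        rw [Fin.castSucc_castPred]
        rw [hemb]
    · -- right inverse
      intro g hg
      funext i
      have hmem : Sᶜ.orderEmbOfFin hc i ∈ Sᶜ := Sᶜ.orderEmbOfFin_mem hc i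
      have : (⟨Sᶜ.orderEmbOfFin hc i, hmem⟩ : {x // x ∈ Sᶜ}) = Sᶜ.orderIsoOfFin hc i := by
        ext
        rw [Finset.coe_orderIsoOfFin_apply]
      simp only [dif_neg (Finset.mem_compl.mp hmem)]
      apply Fin.castSucc_injective
      rw [Fin.castSucc_castPred]
      rw [this, OrderIso.symm_apply_apply]
  · rw [if_neg hj]
    rw [Finset.card_eq_zero, Finset.filter_eq_empty_iff]
    rintro f -
    rintro ⟨hdef, hfibf⟩
    have hlist := ofFn_restrict f S (hfib f hfibf) hc
      (fun i0 => (f (Sᶜ.orderEmbOfFin hc i0)).castPred (hne f hfibf i0))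
      (fun i => Fin.castSucc_castPred _ _)
    have := (defect_iff hk f _ hlist).mp hdef
    rw [hcount f hfibf] at this
    omega

lemma cp_succ (n m k : ℕ) (hk : 0 < k) (hm : k + 1 ≤ m) :
    cp (n+1) m k = ∑ j ∈ Finset.range (k+2), m.choose j * cp n (m-j) (k+1-j) := by
  rw [cp, Finset.card_eq_sum_card_fiberwise
    (f := fun f : Fin m → Fin (n+1) => univ.filter (fun x => f x = Fin.last n))
    (t := univ.powerset) (fun f _ => Finset.mem_powerset.mpr (Finset.subset_univ _))]
  have hterm : ∀ S ∈ (univ : Finset (Fin m)).powerset,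
      ((univ.filter (fun f : Fin m → Fin (n+1) => defect f = k)).filter
        (fun f => univ.filter (fun x => f x = Fin.last n) = S)).card
      = if S.card ≤ k + 1 then cp n (m - S.card) (k + 1 - S.card) else 0 := by
    intro S _
    rw [Finset.filter_filter]
    exact card_fiber hk S
  rw [Finset.sum_congr rfl hterm]
  rw [Finset.sum_powerset]
  have hinner : ∀ j ∈ Finset.range ((univ : Finset (Fin m)).card + 1),
      (∑ S ∈ Finset.powersetCard j (univ : Finset (Fin m)),
        if S.card ≤ k + 1 then cp n (m - S.card) (k + 1 - S.card) else 0)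
      = m.choose j * (if j ≤ k + 1 then cp n (m - j) (k + 1 - j) else 0) := by
    intro j _
    rw [Finset.sum_congr rfl (fun S hS => by
      rw [(Finset.mem_powersetCard.mp hS).2]), Finset.sum_const, smul_eq_mul,
      Finset.card_powersetCard, Finset.card_univ, Fintype.card_fin]
  rw [Finset.sum_congr rfl hinner, Finset.card_univ, Fintype.card_fin]
  rw [← Finset.sum_subset (Finset.range_subset_range.mpr (by omega : k + 2 ≤ m + 1))
    (fun j _ hj => by
      rw [if_neg (by simp at hj ⊢; omega), mul_zero])]
  exact Finset.sum_congr rfl (fun j hj => by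
    rw [if_pos (by simp at hj; omega)])

lemma foldl_snd_le {n : ℕ} : ∀ (L : List (Fin n)) (p : Finset (Fin n) × ℕ),
    (L.foldl parkStep p).2 ≤ p.2 + L.length := by
  intro L
  induction L with
  | nil => simp
  | cons c L ih =>
    intro p
    rw [List.foldl_cons]
    refine (ih (parkStep p c)).trans ?_
    have : (parkStep p c).2 ≤ p.2 + 1 := by
      rw [parkStep]
      split <;> simp
    simp only [List.length_cons]
    omega

lemma cp_degenerate (r k : ℕ) (hk : 0 < k) : cp r k k = 0 := by
  rw [cp, Finset.card_eq_zero, Finset.filter_eq_empty_iff]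
  intro f _
  cases r with
  | zero => exact (f ⟨0, hk⟩).elim0
  | succ r' =>
    obtain ⟨k', rfl⟩ : ∃ k', k = k' + 1 := ⟨k - 1, by omega⟩
    intro hdef
    rw [defect, parkRun, List.ofFn_succ, List.foldl_cons] at hdef
    have h0 : (parkStep ((∅ : Finset (Fin (r'+1))), 0) (f 0)).2 = 0 := by
      rw [parkStep, dif_pos ⟨f 0, by simp⟩]
    have := foldl_snd_le (List.ofFn fun i : Fin k' => f i.succ)
      (parkStep ((∅ : Finset (Fin (r'+1))), 0) (f 0))
    rw [h0, hdef, List.length_ofFn] at this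
    omega

lemma a_eq (r s k : ℕ) : a r s k = cp (r+s) (s+k) k := by
  rw [a, if_pos ⟨Int.natCast_nonneg r, Int.natCast_nonneg s, Int.natCast_nonneg k⟩]
  congr 1 <;> omega

theorem stmt2 (r s k : ℕ) (hk : 0 < k) :
    a r s k = ∑ i ∈ Finset.range (k + 2),
      Nat.choose (s + k) (k + 1 - i) * a r ((s : ℤ) - 1) i := by
  cases s with
  | zero =>
    rw [a_eq]
    simp only [Nat.cast_zero, zero_sub]
    have hz : ∀ i : ℕ, a r (-1 : ℤ) i = 0 := by
      intro i
      rw [a, if_neg (by omega)]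
    simp only [hz, mul_zero, Finset.sum_const_zero]
    simpa using cp_degenerate r k hk
  | succ s' =>
    have hcast : ∀ i : ℕ, a r ((((s' + 1 : ℕ)) : ℤ) - 1) i = cp (r + s') (s' + i) i := by
      intro i
      have : (((s' + 1 : ℕ)) : ℤ) - 1 = ((s' : ℕ) : ℤ) := by push_cast; ring
      rw [this, a_eq]
    simp only [hcast]
    rw [a_eq]
    have hL : r + (s' + 1) = (r + s') + 1 := by omega
    rw [hL, cp_succ (r + s') (s' + 1 + k) k hk (by omega)]
    rw [← Finset.sum_range_reflect (fun i => Nat.choose (s' + 1 + k) (k + 1 - i)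
      * cp (r + s') (s' + i) i) (k + 2)]
    refine Finset.sum_congr rfl (fun j hj => ?_)
    have hj' : j ≤ k + 1 := by simp at hj; omega
    have h1 : k + 1 - (k + 2 - 1 - j) = j := by omega
    have h2 : s' + (k + 2 - 1 - j) = s' + 1 + k - j := by omega
    simp only [h1, h2]
    rw [show k + 2 - 1 - j = k + 1 - j from by omega]
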